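/- Let env be an LTLf formula and h ∈ (2^(X∪Y))* a history; write h|_Y for the projection of h onto the Y-components. Define ⟦env⟧^h = {γ : for every agent strategy σ compatible with h, Trace(γ,σ) has h as a prefix and Trace(γ,σ) ⊨∀ env} and ⟦env, af(h)⟧ = {γ : for every agent strategy σ, h·Trace(γ,σ) ⊨∀ env}. Then: (i) for every γ ∈ ⟦env⟧^h there exists γ' ∈ ⟦env, af(h)⟧ such that γ(h|_Y · λ') = γ'(λ') for every λ' ∈ (2^Y)*; and (ii) for every γ' ∈ ⟦env, af(h)⟧ there exists γ ∈ ⟦env⟧^h such that γ(h|_Y · λ') = γ'(λ') for every λ' ∈ (2^Y)*. -/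

import Mathlib

/- Common framework: traces, strategies, LTLf, plays, deterministic automata and games,
   following the setting of "LTLf synthesis with duties and rights". -/

namespace RightsSynth

/-- An environment move: a propositional interpretation over the environment variables
(an element of `2^X`). -/
abbrev EMove (Xv : Type) := Xv → Bool

/-- An agent move: a propositional interpretation over the agent variables (element of `2^Y`). -/
abbrev AMove (Yv : Type) := Yv → Bool

/-- A letter of the alphabet `2^(X ∪ Y)`. -/
abbrev Letter (Xv Yv : Type) := EMove Xv × AMove Yv

/-- An infinite trace. -/
abbrev ITrace (Xv Yv : Type) := ℕ → Letter Xv Yv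

/-- A finite trace (history). -/
abbrev FTrace (Xv Yv : Type) := List (Letter Xv Yv)

/-- An environment strategy `γ : (2^Y)* → 2^X`. -/
abbrev EnvStrat (Xv Yv : Type) := List (AMove Yv) → EMove Xv

/-- An agent strategy `σ : (2^X)^+ → 2^Y` (only ever applied to nonempty lists). -/
abbrev AgStrat (Xv Yv : Type) := List (EMove Xv) → AMove Yv

variable {Xv Yv : Type}

/-- The `stop` action: all agent variables set to false. -/
def stopMove : AMove Yv := fun _ => false

/-- The finite prefix consisting of the first `n` letters of an infinite trace
(so `pref π (k+1)` is the prefix `π^k` of the paper). -/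
def pref (π : ITrace Xv Yv) (n : ℕ) : FTrace Xv Yv := (List.range n).map π

/-- A finite trace is a prefix of an infinite trace. -/
def IsIPrefix (h : FTrace Xv Yv) (π : ITrace Xv Yv) : Prop := pref π h.length = h

/-- Concatenation `h · π` of a finite history with an infinite trace. -/
def fappend (h : FTrace Xv Yv) (π : ITrace Xv Yv) : ITrace Xv Yv := fun n =>
  if hn : n < h.length then h.get ⟨n, hn⟩ else π (n - h.length)

/-- Shift of an infinite trace by `k` positions. -/
def shift (π : ITrace Xv Yv) (k : ℕ) : ITrace Xv Yv := fun n => π (k + n)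

/-- LTLf formulas over atoms `α`. -/
inductive LTLf (α : Type) : Type
  | atom : α → LTLf α
  | neg : LTLf α → LTLf α
  | conj : LTLf α → LTLf α → LTLf α
  | next : LTLf α → LTLf α
  | untl : LTLf α → LTLf α → LTLf α

/-- Evaluation of an atom (a variable in `X ∪ Y`) at a letter. -/
def evalAtom (l : Letter Xv Yv) : Xv ⊕ Yv → Bool
  | Sum.inl x => l.1 x
  | Sum.inr y => l.2 y

/-- `SatAt π φ i` is `π, i ⊨ φ` over the finite trace `π`. -/
def SatAt (π : FTrace Xv Yv) : LTLf (Xv ⊕ Yv) → ℕ → Prop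
  | .atom a, i => ∃ hi : i < π.length, evalAtom (π.get ⟨i, hi⟩) a = true
  | .neg φ, i => ¬ SatAt π φ i
  | .conj φ ψ, i => SatAt π φ i ∧ SatAt π ψ i
  | .next φ, i => i + 1 < π.length ∧ SatAt π φ (i + 1)
  | .untl φ ψ, i =>
      ∃ j, i ≤ j ∧ j < π.length ∧ SatAt π ψ j ∧ ∀ k, i ≤ k → k < j → SatAt π φ k

/-- `π ⊨ φ`, i.e. `π, 0 ⊨ φ`. -/
def Sat (π : FTrace Xv Yv) (φ : LTLf (Xv ⊕ Yv)) : Prop := SatAt π φ 0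

/-- An infinite trace satisfies `φ` on all (nonempty finite) prefixes: `π ⊨∀ φ`. -/
def SatAllPrefI (π : ITrace Xv Yv) (φ : LTLf (Xv ⊕ Yv)) : Prop :=
  ∀ n : ℕ, Sat (pref π (n + 1)) φ

/-- The finite prefixes of the unique trace compatible with `γ` and `σ`. -/
def traceAux (γ : EnvStrat Xv Yv) (σ : AgStrat Xv Yv) : ℕ → FTrace Xv Yv
  | 0 => []
  | n + 1 =>
      let p := traceAux γ σ n
      let x := γ (p.map Prod.snd)
      p ++ [(x, σ (p.map Prod.fst ++ [x]))]

/-- `Trace(γ,σ)`: the unique infinite trace compatible with `γ` and `σ`. -/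
def traceOf (γ : EnvStrat Xv Yv) (σ : AgStrat Xv Yv) : ITrace Xv Yv := fun n =>
  let p := traceAux γ σ n
  let x := γ (p.map Prod.snd)
  (x, σ (p.map Prod.fst ++ [x]))

/-- An infinite trace is compatible with an environment strategy. -/
def EnvCompat (γ : EnvStrat Xv Yv) (π : ITrace Xv Yv) : Prop :=
  ∀ n, (π n).1 = γ ((pref π n).map Prod.snd)

/-- An infinite trace is compatible with an agent strategy. -/
def AgCompat (σ : AgStrat Xv Yv) (π : ITrace Xv Yv) : Prop :=
  ∀ n, (π n).2 = σ ((pref π (n + 1)).map Prod.fst)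

/-- An agent strategy is compatible with a finite history `h`. -/
def AgCompatH (σ : AgStrat Xv Yv) (h : FTrace Xv Yv) : Prop :=
  ∀ k (hk : k < h.length), (h.get ⟨k, hk⟩).2 = σ ((h.take (k + 1)).map Prod.fst)

/-- An environment strategy is compatible with a finite history `h`. -/
def EnvCompatH (γ : EnvStrat Xv Yv) (h : FTrace Xv Yv) : Prop :=
  ∀ k (hk : k < h.length), (h.get ⟨k, hk⟩).1 = γ ((h.take k).map Prod.snd)

/-- A history that contains no `stop` action. -/
def StopFree (h : FTrace Xv Yv) : Prop := ∀ l ∈ h, l.2 ≠ stopMove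

/-- A stopping agent strategy: on every compatible trace it eventually plays `stop`
forever, and never plays `stop` before that. -/
def Stopping (σ : AgStrat Xv Yv) : Prop :=
  ∀ π : ITrace Xv Yv, AgCompat σ π →
    ∃ i, (∀ j, i ≤ j → (π j).2 = stopMove) ∧ ∀ j, j < i → (π j).2 ≠ stopMove

/-- `Play(γ,σ)`: the finite prefix of `Trace(γ,σ)` ending right before the first `stop`. -/
noncomputable def play (γ : EnvStrat Xv Yv) (σ : AgStrat Xv Yv) : FTrace Xv Yv :=
  pref (traceOf γ σ) (sInf {i | ((traceOf γ σ) i).2 = stopMove})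

/-- `γ ⊳ env`: the environment strategy `γ` enforces the safety specification `env`. -/
def EnforcesEnv (env : LTLf (Xv ⊕ Yv)) (γ : EnvStrat Xv Yv) : Prop :=
  ∀ σ : AgStrat Xv Yv, SatAllPrefI (traceOf γ σ) env

/-- `γ ∈ ⟦env, af(h)⟧`: strategies that start after `h` but enforce `env` when the
compatible traces are concatenated to `h`. -/
def EnvAfter (env : LTLf (Xv ⊕ Yv)) (h : FTrace Xv Yv) (γ : EnvStrat Xv Yv) : Prop :=
  ∀ σ : AgStrat Xv Yv, SatAllPrefI (fappend h (traceOf γ σ)) env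

/-- `γ ∈ ⟦env⟧^h`. -/
def EnvSpecH (env : LTLf (Xv ⊕ Yv)) (h : FTrace Xv Yv) (γ : EnvStrat Xv Yv) : Prop :=
  ∀ σ : AgStrat Xv Yv, AgCompatH σ h →
    IsIPrefix h (traceOf γ σ) ∧ SatAllPrefI (traceOf γ σ) env

/-- `σ ▷_h φ`: `σ` enforces `φ` with respect to the history `h`. -/
def EnforcesWrt (env φ : LTLf (Xv ⊕ Yv)) (σ : AgStrat Xv Yv) (h : FTrace Xv Yv) : Prop :=
  ∀ γ : EnvStrat Xv Yv, EnforcesEnv env γ → h <+: play γ σ → Sat (play γ σ) φ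

/-- `σ ▷_af(h) φ`: `σ` enforces `φ` after the history `h`. -/
def EnforcesAfter (env φ : LTLf (Xv ⊕ Yv)) (σ : AgStrat Xv Yv) (h : FTrace Xv Yv) : Prop :=
  ∀ γ : EnvStrat Xv Yv, EnforcesEnv env γ → h <+: play γ σ → SatAt (play γ σ) φ h.length

/-- A deterministic automaton (acceptance conditions are given separately). -/
structure DA (L : Type) (Q : Type) where
  init : Q
  next : Q → L → Q

variable {L Q Q1 Q2 Q3 : Type}

/-- The run of a DA on an infinite word, from state `q`: `runFrom q π n` is the `n`-th
state `q_n` of the run. -/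
def DA.runFrom (B : DA L Q) (q : Q) (π : ℕ → L) : ℕ → Q
  | 0 => q
  | n + 1 => B.next (B.runFrom q π n) (π n)

/-- The run of a DA on an infinite word from its initial state. -/
def DA.run (B : DA L Q) (π : ℕ → L) : ℕ → Q := B.runFrom B.init π

/-- The state reached by a DA after reading a finite word from state `q`. -/
def DA.runList (B : DA L Q) : Q → List L → Q
  | q, [] => q
  | q, a :: w => B.runList (B.next q a) w

/-- Product of two DAs. -/
def prod2 (A : DA L Q1) (B : DA L Q2) : DA L (Q1 × Q2) :=
  ⟨(A.init, B.init), fun q a => (A.next q.1 a, B.next q.2 a)⟩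

/-- Product of three DAs. -/
def prod3 (A : DA L Q1) (B : DA L Q2) (C : DA L Q3) : DA L (Q1 × Q2 × Q3) :=
  ⟨(A.init, B.init, C.init), fun q a => (A.next q.1 a, B.next q.2.1 a, C.next q.2.2 a)⟩

/-- The environment winning region of the safety game on a DA with safe set `S`. -/
def EnvWinSet (B : DA (Letter Xv Yv) Q) (S : Set Q) : Set Q :=
  {q | ∃ γ : EnvStrat Xv Yv, ∀ σ : AgStrat Xv Yv, ∀ k, B.runFrom q (traceOf γ σ) k ∈ S}

/-- Least-fixpoint approximants of the reachability game with target `R`. -/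
def AgnApprox (B : DA (Letter Xv Yv) Q) (R : Set Q) : ℕ → Set Q
  | 0 => R
  | l + 1 => AgnApprox B R l ∪
      {q | ∀ x : EMove Xv, ∃ y : AMove Yv, B.next q (x, y) ∈ AgnApprox B R l}

/-- Agent winning region of the reachability game (union of the approximants). -/
def Agn (B : DA (Letter Xv Yv) Q) (R : Set Q) : Set Q := ⋃ l, AgnApprox B R l

/-- Least-fixpoint approximants of the reachability game restricted to `Legal` states, where
the environment may only choose moves satisfying `Allowed` (this also subsumes the
reachability–safety reduction, with `Legal` the safe set, since non-`Legal` sink states never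
enter any approximant). -/
def RAgnApprox (B : DA (Letter Xv Yv) Q) (Legal : Set Q)
    (Allowed : Q → EMove Xv → Prop) (R : Set Q) : ℕ → Set Q
  | 0 => R ∩ Legal
  | l + 1 => RAgnApprox B Legal Allowed R l ∪
      {q | q ∈ Legal ∧ ∀ x : EMove Xv, Allowed q x →
        ∃ y : AMove Yv, B.next q (x, y) ∈ RAgnApprox B Legal Allowed R l}

/-- Agent winning region of the restricted reachability game. -/
def RAgn (B : DA (Letter Xv Yv) Q) (Legal : Set Q)
    (Allowed : Q → EMove Xv → Prop) (R : Set Q) : Set Q :=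
  ⋃ l, RAgnApprox B Legal Allowed R l

/-- The greatest subset `E ⊆ S` such that from every state of `E` the environment has a move
keeping the game in `E` whatever the agent responds (greatest fixpoint). -/
def EnvGfp (B : DA (Letter Xv Yv) Q) (S : Set Q) : Set Q :=
  ⋃₀ {E : Set Q | E ⊆ S ∧ ∀ q ∈ E, ∃ x : EMove Xv, ∀ y : AMove Yv, B.next q (x, y) ∈ E}



section Aux
variable {Xv Yv : Type}

lemma traceAux_succ' (γ : EnvStrat Xv Yv) (σ : AgStrat Xv Yv) (n : ℕ) :
    traceAux γ σ (n+1) = traceAux γ σ n ++ [traceOf γ σ n] := rfl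

lemma traceOf_def' (γ : EnvStrat Xv Yv) (σ : AgStrat Xv Yv) (n : ℕ) :
    traceOf γ σ n = (γ ((traceAux γ σ n).map Prod.snd),
      σ ((traceAux γ σ n).map Prod.fst ++ [γ ((traceAux γ σ n).map Prod.snd)])) := rfl

lemma traceAux_length' (γ : EnvStrat Xv Yv) (σ : AgStrat Xv Yv) (n : ℕ) :
    (traceAux γ σ n).length = n := by
  induction n with
  | zero => rfl
  | succ n ih => rw [traceAux_succ', List.length_append, ih]; rfl

lemma pref_succ' (π : ITrace Xv Yv) (n : ℕ) : pref π (n+1) = pref π n ++ [π n] := by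
  simp [pref, List.range_succ]

lemma traceAux_eq_pref' (γ : EnvStrat Xv Yv) (σ : AgStrat Xv Yv) (n : ℕ) :
    traceAux γ σ n = pref (traceOf γ σ) n := by
  induction n with
  | zero => rfl
  | succ n ih => rw [traceAux_succ', pref_succ', ih]

lemma traceAux_prefix' (γ : EnvStrat Xv Yv) (σ : AgStrat Xv Yv) {n m : ℕ} (hnm : n ≤ m) :
    traceAux γ σ n <+: traceAux γ σ m := by
  induction m with
  | zero => simp_all
  | succ m ih =>
    rcases Nat.lt_or_ge n (m+1) with hlt | hge
    · exact (ih (Nat.lt_succ_iff.mp hlt)).trans ⟨_, (traceAux_succ' γ σ m).symm⟩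
    · have : n = m + 1 := le_antisymm hnm hge
      subst this; exact List.prefix_rfl

lemma traceAux_take' (γ : EnvStrat Xv Yv) (σ : AgStrat Xv Yv) {n m : ℕ} (hnm : n ≤ m) :
    traceAux γ σ n = (traceAux γ σ m).take n := by
  have h := (List.prefix_iff_eq_take.mp (traceAux_prefix' γ σ hnm))
  rwa [traceAux_length'] at h

/-- Core: if after history `h` the pair `(γ, σ2)` simulates `(γ', σ)`, then the
finite approximations shift accordingly. -/
lemma shift_aux {h : FTrace Xv Yv} {γ γ' : EnvStrat Xv Yv} {σ2 σ : AgStrat Xv Yv}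
    (hg : ∀ lam, γ (h.map Prod.snd ++ lam) = γ' lam)
    (hs : ∀ w : List (EMove Xv), w ≠ [] → σ2 (h.map Prod.fst ++ w) = σ w)
    (base : traceAux γ σ2 h.length = h) :
    ∀ n, traceAux γ σ2 (h.length + n) = h ++ traceAux γ' σ n := by
  intro n
  induction n with
  | zero => simpa [traceAux] using base
  | succ n ih =>
    have key : traceOf γ σ2 (h.length + n) = traceOf γ' σ n := by
      rw [traceOf_def', traceOf_def', ih, List.map_append, List.map_append, hg,
        List.append_assoc, hs _ (by simp)]
    rw [show h.length + (n+1) = (h.length + n) + 1 from rfl, traceAux_succ', ih,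
      traceAux_succ', key, List.append_assoc]

lemma traceOf_shift {h : FTrace Xv Yv} {γ γ' : EnvStrat Xv Yv} {σ2 σ : AgStrat Xv Yv}
    (H : ∀ n, traceAux γ σ2 (h.length + n) = h ++ traceAux γ' σ n) (n : ℕ) :
    traceOf γ σ2 (h.length + n) = traceOf γ' σ n := by
  have h1 := H (n+1)
  rw [show h.length + (n+1) = (h.length + n) + 1 from rfl, traceAux_succ', H n,
    traceAux_succ', ← List.append_assoc] at h1
  simpa using h1

lemma traceOf_lt {h : FTrace Xv Yv} {γ : EnvStrat Xv Yv} {σ2 : AgStrat Xv Yv}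
    (base : traceAux γ σ2 h.length = h) {n : ℕ} (hn : n < h.length) :
    traceOf γ σ2 n = h.get ⟨n, hn⟩ := by
  have h1 : traceAux γ σ2 n = h.take n := by
    rw [traceAux_take' γ σ2 (le_of_lt hn), base]
  have h2 : traceAux γ σ2 (n+1) = h.take (n+1) := by
    rw [traceAux_take' γ σ2 hn, base]
  rw [traceAux_succ', h1] at h2
  have h3 : h.take n ++ [h.get ⟨n, hn⟩] = h.take (n+1) := by
    rw [List.get_eq_getElem, ← List.concat_eq_append]
    exact List.take_concat_get hn
  exact (List.cons.inj (List.append_cancel_left (h2.trans h3.symm))).1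

lemma traceOf_eq_fappend {h : FTrace Xv Yv} {γ γ' : EnvStrat Xv Yv} {σ2 σ : AgStrat Xv Yv}
    (H : ∀ n, traceAux γ σ2 (h.length + n) = h ++ traceAux γ' σ n) :
    traceOf γ σ2 = fappend h (traceOf γ' σ) := by
  have base : traceAux γ σ2 h.length = h := by simpa [traceAux] using H 0
  funext n
  by_cases hn : n < h.length
  · rw [fappend, dif_pos hn]
    exact traceOf_lt base hn
  · rw [fappend, dif_neg hn]
    have h2 : h.length + (n - h.length) = n := by omega
    calc traceOf γ σ2 n = traceOf γ σ2 (h.length + (n - h.length)) := by rw [h2]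
      _ = traceOf γ' σ (n - h.length) := traceOf_shift H _

end Aux

/-- Lemma 5: correspondence between `⟦env⟧^h` and `⟦env, af(h)⟧`:
(i) every `γ ∈ ⟦env⟧^h` agrees after `h|_Y` with some `γ' ∈ ⟦env, af(h)⟧`, and
(ii) every `γ' ∈ ⟦env, af(h)⟧` arises this way from some `γ ∈ ⟦env⟧^h`. -/
theorem statement10 {Xv Yv : Type} [Fintype Xv] [Fintype Yv]
    (env : LTLf (Xv ⊕ Yv)) (h : FTrace Xv Yv) :
    (∀ γ : EnvStrat Xv Yv, EnvSpecH env h γ →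
        ∃ γ' : EnvStrat Xv Yv, EnvAfter env h γ' ∧
          ∀ lam : List (AMove Yv), γ (h.map Prod.snd ++ lam) = γ' lam) ∧
      ∀ γ' : EnvStrat Xv Yv, EnvAfter env h γ' →
        ∃ γ : EnvStrat Xv Yv, EnvSpecH env h γ ∧
          ∀ lam : List (AMove Yv), γ (h.map Prod.snd ++ lam) = γ' lam := by
  classical
  constructor
  · -- part (i)
    intro γ hγ
    refine ⟨fun lam => γ (h.map Prod.snd ++ lam), ?_, fun lam => rfl⟩
    intro σ
    set σ2 : AgStrat Xv Yv := fun w =>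
      if w.length ≤ h.length then (h.getD (w.length - 1) default).2
      else σ (w.drop h.length) with hσ2def
    have hcompat : AgCompatH σ2 h := by
      intro k hk
      have hlen : ((h.take (k+1)).map Prod.fst).length = k + 1 := by
        simp [Nat.succ_le_of_lt hk]
      show _ = σ2 _
      rw [hσ2def]
      simp only [hlen]
      rw [if_pos (Nat.succ_le_of_lt hk)]
      simp [List.getElem?_eq_getElem hk]
    obtain ⟨hpre, hsat⟩ := hγ σ2 hcompat
    have base : traceAux γ σ2 h.length = h := by
      rw [traceAux_eq_pref']; exact hpre
    have hs : ∀ w : List (EMove Xv), w ≠ [] → σ2 (h.map Prod.fst ++ w) = σ w := by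
      intro w hw
      have hwlen : ¬ (h.map Prod.fst ++ w).length ≤ h.length := by
        have : 0 < w.length := List.length_pos_iff.mpr hw
        simp only [List.length_append, List.length_map]
        omega
      rw [hσ2def]
      simp only [hwlen, if_false]
      rw [List.drop_left' (by simp)]
    have H := shift_aux (fun lam => rfl) hs base
    rw [← traceOf_eq_fappend H]
    exact hsat
  · -- part (ii)
    intro γ' hγ'
    refine ⟨fun lam => if hl : lam.length < h.length then (h.getD lam.length default).1
        else γ' (lam.drop h.length), ?_, ?_⟩
    · intro σ hσ
      set γ : EnvStrat Xv Yv := fun lam =>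
        if hl : lam.length < h.length then (h.getD lam.length default).1
        else γ' (lam.drop h.length) with hγdef
      have base : ∀ k, k ≤ h.length → traceAux γ σ k = h.take k := by
        intro k
        induction k with
        | zero => intro _; simp [traceAux]
        | succ k ih =>
          intro hk1
          have hk : k < h.length := hk1
          have ihk := ih (le_of_lt hk)
          have hlen : ((h.take k).map Prod.snd).length = k := by simp [le_of_lt hk]
          have hx : γ ((h.take k).map Prod.snd) = (h.get ⟨k, hk⟩).1 := by
            rw [hγdef]
            simp only [hlen]
            rw [dif_pos hk]
            simp [List.getElem?_eq_getElem hk]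
          have ht : (h.take k).map Prod.fst ++ [(h.get ⟨k, hk⟩).1] =
              (h.take (k+1)).map Prod.fst := by
            have h3 : h.take k ++ [h.get ⟨k, hk⟩] = h.take (k+1) := by
              rw [List.get_eq_getElem, ← List.concat_eq_append]
              exact List.take_concat_get hk
            rw [← h3]
            simp only [List.map_append, List.map_cons, List.map_nil]
          have hy : σ ((h.take k).map Prod.fst ++ [(h.get ⟨k, hk⟩).1]) =
              (h.get ⟨k, hk⟩).2 := by
            rw [ht]; exact (hσ k hk).symm
          have hk2 : traceOf γ σ k = h.get ⟨k, hk⟩ := by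
            rw [traceOf_def', ihk, hx, hy]
          rw [traceAux_succ', ihk, hk2]
          rw [List.get_eq_getElem, ← List.concat_eq_append]
          exact List.take_concat_get hk
      have baseH : traceAux γ σ h.length = h := by
        rw [base h.length le_rfl, List.take_length]
      set σ' : AgStrat Xv Yv := fun w => σ (h.map Prod.fst ++ w) with hσ'def
      have hg : ∀ lam, γ (h.map Prod.snd ++ lam) = γ' lam := by
        intro lam
        have hnl : ¬ (h.map Prod.snd ++ lam).length < h.length := by
          simp only [List.length_append, List.length_map]; omega
        rw [hγdef]
        simp only [hnl, dif_neg, not_false_iff]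
        rw [List.drop_left' (by simp)]
      have H := shift_aux hg (fun w _ => rfl) baseH
      refine ⟨?_, ?_⟩
      · show pref (traceOf γ σ) h.length = h
        rw [← traceAux_eq_pref', baseH]
      · rw [traceOf_eq_fappend H]
        exact hγ' σ'
    · intro lam
      have hnl : ¬ (h.map Prod.snd ++ lam).length < h.length := by
        simp only [List.length_append, List.length_map]; omega
      simp only [hnl, dif_neg, not_false_iff]
      rw [List.drop_left' (by simp)]


end RightsSynth
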